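/- arXiv:0906.0186 — 2 statements merged into one kernel-verified Lean document; each statement's English description precedes it below -/
import Mathlib

section
/- Let ν be strictly dominant and let T ⊆ U_1 be a set such that the valuations of the entries of the elements of T are bounded below, i.e. there is B ∈ ℤ with val(g_{pq}) ≥ B for every g ∈ T and all p < q. Then for every negative integer N < B one has T ⊆ U_N and f_ν⁻¹(T) ⊆ U_N. -/
noncomputable section

open Matrix

/-- The ε-adic valuation on `L = k̄((ε))`, with `val 0 = ∞`. -/
def val {K : Type*} [Field K] (x : LaurentSeries K) : WithTop ℤ := x.orderTop

/-- The uniformizer ε of the Laurent series field. -/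
def eps (K : Type*) [Field K] : LaurentSeries K := HahnSeries.single 1 1

/-- `σ : L → L` is the Frobenius automorphism: it fixes ε and raises each Laurent-series
coefficient to the `q`-th power.  (This property determines `σ` uniquely.) -/
def IsFrobenius (K : Type*) [Field K] (q : ℕ)
    (σ : LaurentSeries K → LaurentSeries K) : Prop :=
  ∀ (x : LaurentSeries K) (n : ℤ), (σ x).coeff n = (x.coeff n) ^ q

/-- Upper unitriangular matrix: an element of `U_1`. -/
def Unitri {K : Type*} [Field K] {n : ℕ}
    (g : Matrix (Fin n) (Fin n) (LaurentSeries K)) : Prop :=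
  (∀ i, g i i = 1) ∧ (∀ i j : Fin n, j < i → g i j = 0)

/-- `ν = (ν_1, …, ν_n)` is strictly dominant: `ν_1 > ν_2 > … > ν_n`. -/
def StrictDominant {n : ℕ} (ν : Fin n → ℤ) : Prop :=
  ∀ p q : Fin n, p < q → ν q < ν p

/-- The diagonal matrix `ε^ν = diag(ε^{ν_1}, …, ε^{ν_n})`. -/
def epsDiag (K : Type*) [Field K] {n : ℕ} (ν : Fin n → ℤ) :
    Matrix (Fin n) (Fin n) (LaurentSeries K) :=
  Matrix.diagonal fun i => eps K ^ (ν i)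

/-- The map `f_ν : U_1 → U_1`, `f_ν(h) = h⁻¹ · ε^ν · σ(h) · ε^{−ν}`. -/
def fnu {K : Type*} [Field K] {n : ℕ} (σ : LaurentSeries K → LaurentSeries K)
    (ν : Fin n → ℤ) (g : Matrix (Fin n) (Fin n) (LaurentSeries K)) :
    Matrix (Fin n) (Fin n) (LaurentSeries K) :=
  g⁻¹ * epsDiag K ν * g.map σ * epsDiag K (fun i => -ν i)

/-- The subgroup `U(o_L)` of `U_1`: unitriangular matrices with entries in `o_L`. -/
def UO (K : Type*) [Field K] (n : ℕ) :
    Set (Matrix (Fin n) (Fin n) (LaurentSeries K)) :=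
  {g | Unitri g ∧ ∀ p q : Fin n, 0 ≤ val (g p q)}

/-- `U_N = {g ∈ U_1 : val(g_{pq}) ≥ (q−p)·N for all p < q}`
(equivalently `ε^{−μ}·U(o_L)·ε^{μ}` for `μ = (N, 2N, …, nN)`). -/
def UN (K : Type*) [Field K] (n : ℕ) (N : ℤ) :
    Set (Matrix (Fin n) (Fin n) (LaurentSeries K)) :=
  {g | Unitri g ∧ ∀ p q : Fin n, p < q →
    ((((q : ℤ) - (p : ℤ)) * N : ℤ) : WithTop ℤ) ≤ val (g p q)}

/-- `U_{m,N} = {g ∈ U_1 : val(g_{pq}) ≥ (q−p)·N + m for all p < q}`. -/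
def UmN (K : Type*) [Field K] (n : ℕ) (m N : ℤ) :
    Set (Matrix (Fin n) (Fin n) (LaurentSeries K)) :=
  {g | Unitri g ∧ ∀ p q : Fin n, p < q →
    ((((q : ℤ) - (p : ℤ)) * N + m : ℤ) : WithTop ℤ) ≤ val (g p q)}

section Aux

variable {K : Type*} [Field K]

lemma val_le_val_of_coeff {x y : LaurentSeries K}
    (h : ∀ n : ℤ, y.coeff n ≠ 0 → x.coeff n ≠ 0) : val x ≤ val y := by
  rcases eq_or_ne y 0 with rfl | hy
  · simp [val]
  · obtain ⟨g, hg⟩ := WithTop.ne_top_iff_exists.mp (HahnSeries.orderTop_ne_top.mpr hy)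
    rw [val, val, ← hg]
    exact HahnSeries.orderTop_le_of_coeff_ne_zero (h g (HahnSeries.coeff_orderTop_ne hg.symm))

lemma val_sigma {q : ℕ} (hq : q ≠ 0) {σ : LaurentSeries K → LaurentSeries K}
    (hσ : IsFrobenius K q σ) (x : LaurentSeries K) : val (σ x) = val x := by
  refine le_antisymm (val_le_val_of_coeff fun n hn => ?_) (val_le_val_of_coeff fun n hn => ?_)
  · rw [hσ x n]; exact pow_ne_zero _ hn
  · intro hx
    rw [hσ x n, hx, zero_pow hq] at hn
    exact hn rfl

lemma le_val_mul {a b : ℤ} {x y : LaurentSeries K} (hx : (a : WithTop ℤ) ≤ val x)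
    (hy : (b : WithTop ℤ) ≤ val y) : (((a + b : ℤ)) : WithTop ℤ) ≤ val (x * y) := by
  calc ((a + b : ℤ) : WithTop ℤ) = (a : WithTop ℤ) + (b : WithTop ℤ) := by
        rw [WithTop.coe_add]
    _ ≤ val x + val y := add_le_add hx hy
    _ ≤ val (x * y) := HahnSeries.orderTop_add_le_mul

lemma le_val_sum {ι : Type*} (s : Finset ι) (f : ι → LaurentSeries K) (M : WithTop ℤ)
    (h : ∀ i ∈ s, M ≤ val (f i)) : M ≤ val (∑ i ∈ s, f i) := by
  classical
  induction s using Finset.induction with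
  | empty => simp [val]
  | @insert a s hi ih =>
    rw [Finset.sum_insert hi]
    refine le_trans (le_min (h a (Finset.mem_insert_self a s)) (ih fun i his => h i ?_)) ?_
    · exact Finset.mem_insert_of_mem his
    · exact HahnSeries.min_orderTop_le_orderTop_add

lemma single_one_pow (m : ℕ) :
    (HahnSeries.single (1 : ℤ) (1 : K)) ^ m = HahnSeries.single (m : ℤ) 1 := by
  rw [HahnSeries.single_pow]
  simp

lemma eps_zpow (c : ℤ) : (eps K) ^ c = HahnSeries.single c 1 := by
  cases c with
  | ofNat m =>
    rw [Int.ofNat_eq_coe, zpow_natCast, eps, single_one_pow]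
  | negSucc m =>
    rw [zpow_negSucc, eps, single_one_pow]
    refine inv_eq_of_mul_eq_one_left ?_
    rw [HahnSeries.single_mul_single, one_mul]
    rw [show (Int.negSucc m) + ((m + 1 : ℕ) : ℤ) = 0 by rw [Int.negSucc_eq]; push_cast; ring, HahnSeries.single_zero_one]

lemma val_single_mul (c : ℤ) (x : LaurentSeries K) :
    val (HahnSeries.single c 1 * x) = (c : WithTop ℤ) + val x := by
  refine le_antisymm ?_ ?_
  · have h1 : HahnSeries.single (-c) (1 : K) * (HahnSeries.single c 1 * x) = x := by
      rw [← mul_assoc, HahnSeries.single_mul_single, one_mul, neg_add_cancel,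
        HahnSeries.single_zero_one, one_mul]
    have h2 : ((-c : ℤ) : WithTop ℤ) + val (HahnSeries.single c (1:K) * x) ≤ val x := by
      nth_rewrite 2 [← h1]
      refine le_trans (add_le_add_left (le_of_eq ?_) _)
        HahnSeries.orderTop_add_le_mul
      exact (HahnSeries.orderTop_single one_ne_zero).symm
    have := add_le_add_right h2 ((c : ℤ) : WithTop ℤ)
    rwa [← add_assoc, ← WithTop.coe_add, add_neg_cancel, WithTop.coe_zero, zero_add] at this
  · refine le_trans (add_le_add_left (le_of_eq ?_) _)
      HahnSeries.orderTop_add_le_mul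
    exact (HahnSeries.orderTop_single one_ne_zero).symm

lemma val_twist {c : ℤ} (hc : 0 < c) {x y : LaurentSeries K}
    (hy : val y = (c : WithTop ℤ) + val x) {M : ℤ}
    (h : (M : WithTop ℤ) ≤ val (x - y)) : (M : WithTop ℤ) ≤ val x := by
  by_contra hlt
  push_neg at hlt
  obtain ⟨v, hv⟩ := WithTop.ne_top_iff_exists.mp ((hlt.trans (WithTop.coe_lt_top M)).ne)
  have h3 : val x < val y := by
    rw [hy, ← hv, ← WithTop.coe_add, WithTop.coe_lt_coe]
    omega
  have h2 : val x < val (x - y) := lt_of_lt_of_le hlt h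
  have h1 : min (val (x - y)) (val y) ≤ val x := by
    have := HahnSeries.min_orderTop_le_orderTop_add (x := x - y) (y := y)
    rwa [sub_add_cancel] at this
  exact absurd h1 (not_le.mpr (lt_min h2 h3))

end Aux

/-- if `ν` is strictly dominant and `T ⊆ U_1` has the valuations of the
entries of its elements bounded below by `B`, then for every negative integer `N < B`
one has `T ⊆ U_N` and `f_ν⁻¹(T) ⊆ U_N`. -/
theorem T_and_preimage_subset_UN (F : Type*) [Field F] [Fintype F]
    (n : ℕ) (hn : 2 ≤ n)
    (σ : LaurentSeries (AlgebraicClosure F) → LaurentSeries (AlgebraicClosure F))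
    (hσ : IsFrobenius (AlgebraicClosure F) (Fintype.card F) σ)
    (ν : Fin n → ℤ) (hν : StrictDominant ν)
    (T : Set (Matrix (Fin n) (Fin n) (LaurentSeries (AlgebraicClosure F))))
    (hT : T ⊆ {g | Unitri g})
    (B : ℤ)
    (hB : ∀ g ∈ T, ∀ p q : Fin n, p < q → (B : WithTop ℤ) ≤ val (g p q))
    (N : ℤ) (hN0 : N < 0) (hNB : N < B) :
    T ⊆ UN (AlgebraicClosure F) n N ∧
    (∀ g, Unitri g → fnu σ ν g ∈ T → g ∈ UN (AlgebraicClosure F) n N) := by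
  set K := AlgebraicClosure F
  have hq0 : Fintype.card F ≠ 0 := Fintype.card_ne_zero
  have hstep : ∀ p q : Fin n, p < q → (((q : ℤ) - (p : ℤ)) * N : ℤ) ≤ B := by
    intro p q hpq
    have hpq' : (p : ℕ) < (q : ℕ) := hpq
    have h1 : (1 : ℤ) ≤ (q : ℤ) - (p : ℤ) := by omega
    nlinarith
  constructor
  · intro g hg
    refine ⟨hT hg, fun p q hpq => ?_⟩
    exact le_trans (WithTop.coe_le_coe.mpr (hstep p q hpq)) (hB g hg p q hpq)
  · intro g hg hmem
    set h := fnu σ ν g with hhdef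
    have hhU : Unitri h := hT hmem
    have hb : ∀ p q : Fin n, p < q → (B : WithTop ℤ) ≤ val (h p q) := hB h hmem
    have hdet : IsUnit g.det := by
      have : g.det = 1 := by
        rw [Matrix.det_of_upperTriangular (fun i j hij => hg.2 i j hij)]
        simp [hg.1]
      rw [this]; exact isUnit_one
    have hkey : g * h = epsDiag K ν * g.map σ * epsDiag K (fun i => -ν i) := by
      rw [hhdef]
      unfold fnu
      simp only [← Matrix.mul_assoc]
      rw [Matrix.mul_nonsing_inv _ hdet, Matrix.one_mul]
    have hentry : ∀ p q : Fin n, (∑ r, g p r * h r q) =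
        HahnSeries.single ((ν p) : ℤ) (1 : K) * σ (g p q) *
          HahnSeries.single (-(ν q) : ℤ) 1 := by
      intro p q
      have := congrFun (congrFun hkey p) q
      rw [Matrix.mul_apply] at this
      simp only [epsDiag, Matrix.mul_diagonal, Matrix.diagonal_mul, Matrix.map_apply,
        eps_zpow] at this
      exact this
    have key : ∀ d : ℕ, ∀ p q : Fin n, p < q → (q : ℕ) - (p : ℕ) ≤ d →
        ((((q : ℤ) - (p : ℤ)) * N : ℤ) : WithTop ℤ) ≤ val (g p q) := by
      intro d
      induction d with
      | zero =>
        intro p q hpq hd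
        have hpq' : (p : ℕ) < (q : ℕ) := hpq
        omega
      | succ d IH =>
        intro p q hpq hd
        have hpq' : (p : ℕ) < (q : ℕ) := hpq
        set Y := HahnSeries.single ((ν p) : ℤ) (1 : K) * σ (g p q) *
          HahnSeries.single (-(ν q) : ℤ) 1 with hYdef
        set M : ℤ := ((q : ℤ) - (p : ℤ)) * N + 1 with hMdef
        have hsum : (∑ r ∈ Finset.univ.erase q, g p r * h r q) + g p q = Y := by
          rw [hYdef, ← hentry p q, ← Finset.sum_erase_add Finset.univ _ (Finset.mem_univ q)]
          rw [hhU.1 q, mul_one]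
        have hS : (M : WithTop ℤ) ≤ val (∑ r ∈ Finset.univ.erase q, g p r * h r q) := by
          refine le_val_sum _ _ _ fun r hr => ?_
          have hrq : r ≠ q := Finset.ne_of_mem_erase hr
          rcases lt_or_ge r p with hrp | hpr
          · rw [hg.2 p r hrp, zero_mul]
            exact le_of_le_of_eq le_top (by simp [val])
          · rcases lt_or_ge q r with hqr | hrq'
            · rw [hhU.2 r q hqr, mul_zero]
              exact le_of_le_of_eq le_top (by simp [val])
            · -- p ≤ r < q
              have hrltq : (r : ℕ) < (q : ℕ) := lt_of_le_of_ne (by exact_mod_cast hrq')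
                (fun hc => hrq (Fin.ext hc))
              rcases eq_or_lt_of_le hpr with heq | hlt
              · subst heq
                rw [hg.1 p, one_mul]
                refine le_trans (WithTop.coe_le_coe.mpr ?_) (hb p q hpq)
                have h1 : (1 : ℤ) ≤ (q : ℤ) - (p : ℤ) := by omega
                have h2 : ((q : ℤ) - (p : ℤ)) * N ≤ 1 * N :=
                  mul_le_mul_of_nonpos_right h1 hN0.le
                rw [hMdef]
                linarith
              · have hpr' : (p : ℕ) < (r : ℕ) := hlt
                have hgpr : ((((r : ℤ) - (p : ℤ)) * N : ℤ) : WithTop ℤ) ≤ val (g p r) :=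
                  IH p r hlt (by omega)
                have hhrq : (B : WithTop ℤ) ≤ val (h r q) :=
                  hb r q (by exact_mod_cast hrltq)
                refine le_trans (WithTop.coe_le_coe.mpr ?_) (le_val_mul hgpr hhrq)
                have h1 : (1 : ℤ) ≤ (q : ℤ) - (r : ℤ) := by omega
                have h2 : ((q : ℤ) - (r : ℤ)) * N ≤ 1 * N :=
                  mul_le_mul_of_nonpos_right h1 hN0.le
                have h3 : ((q : ℤ) - (p : ℤ)) * N
                    = ((q : ℤ) - (r : ℤ)) * N + ((r : ℤ) - (p : ℤ)) * N := by ring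
                rw [hMdef]
                linarith
        have hdiff : (M : WithTop ℤ) ≤ val (g p q - Y) := by
          have : g p q - Y = -(∑ r ∈ Finset.univ.erase q, g p r * h r q) := by
            rw [← hsum]; ring
          rw [this, val, HahnSeries.orderTop_neg]
          exact hS
        have hy : val Y = ((ν p - ν q : ℤ) : WithTop ℤ) + val (g p q) := by
          have hY2 : Y = HahnSeries.single ((ν p) : ℤ) (1 : K) *
              (HahnSeries.single (-(ν q) : ℤ) (1 : K) * σ (g p q)) := by
            rw [hYdef]; ring
          rw [hY2, val_single_mul, val_single_mul, val_sigma hq0 hσ,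
            ← add_assoc, ← WithTop.coe_add]
          congr 2 <;> ring
        have := val_twist (sub_pos.mpr (hν p q hpq)) hy hdiff
        refine le_trans (WithTop.coe_le_coe.mpr ?_) this
        omega
    exact ⟨hg, fun p q hpq => key n p q hpq (by omega)⟩
end
end

section
/- Let d ≤ e < f be integers with d + e + f = 0, and assume k ≤ e. Suppose val(β) = d, k > d, j + k > d + e, val(α·ε^k) = d + e, and val(α·γ − β·ε^j) > d + e. Then val(c) ≤ 0 if and only if e ≥ j, and when e ≥ j one has val(c) = j − e. -/
noncomputable section

section Helpers

variable {K : Type*} [Field K]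

lemma eps_ne_zero : eps K ≠ 0 := HahnSeries.single_ne_zero one_ne_zero

lemma val_zero' : val (0 : LaurentSeries K) = ⊤ := HahnSeries.orderTop_zero

lemma val_neg' (x : LaurentSeries K) : val (-x) = val x := HahnSeries.orderTop_neg

lemma val_mul' (x y : LaurentSeries K) : val (x * y) = val x + val y := by
  by_cases hx : x = 0
  · simp [hx, val]
  by_cases hy : y = 0
  · simp [hy, val]
  have hxy : x * y ≠ 0 := mul_ne_zero hx hy
  unfold val
  rw [← HahnSeries.order_eq_orderTop_of_ne_zero hx, ← HahnSeries.order_eq_orderTop_of_ne_zero hy,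
    ← HahnSeries.order_eq_orderTop_of_ne_zero hxy, HahnSeries.order_mul hx hy]
  norm_cast

lemma val_eps' : val (eps K) = ((1 : ℤ) : WithTop ℤ) :=
  HahnSeries.orderTop_single one_ne_zero

lemma val_eps_zpow (n : ℤ) : val (eps K ^ n) = (n : WithTop ℤ) := by
  have hnat : ∀ m : ℕ, val (eps K ^ (m : ℤ)) = ((m : ℤ) : WithTop ℤ) := by
    intro m
    induction m with
    | zero => simpa [val] using (HahnSeries.orderTop_one (Γ := ℤ) (R := K))
    | succ p ih =>
      have : (eps K) ^ ((p : ℤ) + 1) = eps K ^ (p : ℤ) * eps K := by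
        rw [zpow_add₀ eps_ne_zero, zpow_one]
      push_cast
      rw [this, val_mul', ih, val_eps']
      push_cast
      ring
  rcases le_or_gt 0 n with h | h
  · obtain ⟨m, rfl⟩ := Int.eq_ofNat_of_zero_le h
    exact hnat m
  · obtain ⟨m, hm⟩ := Int.eq_ofNat_of_zero_le (by omega : (0:ℤ) ≤ -n)
    have h1 : eps K ^ n * eps K ^ (-n) = 1 := by
      rw [← zpow_add₀ eps_ne_zero]; simp
    have h2 := val_mul' (eps K ^ n) (eps K ^ (-n))
    rw [h1, hm, hnat m] at h2
    have h3 : val (1 : LaurentSeries K) = ((0:ℤ) : WithTop ℤ) := by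
      simp [val]
    rw [h3] at h2
    have hne : val (eps K ^ n) ≠ ⊤ := by
      intro ht; rw [ht] at h2; simp at h2
    obtain ⟨v, hv⟩ := WithTop.ne_top_iff_exists.mp hne
    rw [← hv] at h2 ⊢
    have : v + (m : ℤ) = 0 := by exact_mod_cast h2.symm
    have : v = n := by omega
    rw [this]

lemma val_le_of_imp {x y : LaurentSeries K} (hy : y ≠ 0)
    (h : ∀ n, y.coeff n ≠ 0 → x.coeff n ≠ 0) : val x ≤ val y := by
  have hne : y.orderTop ≠ ⊤ := HahnSeries.orderTop_ne_top.mpr hy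
  obtain ⟨g, hg⟩ := WithTop.ne_top_iff_exists.mp hne
  have hyg : y.coeff g ≠ 0 := HahnSeries.coeff_orderTop_ne hg.symm
  have := HahnSeries.orderTop_le_of_coeff_ne_zero (h g hyg)
  rw [val, val, ← hg]
  exact this

lemma val_congr {x y : LaurentSeries K} (h : ∀ n, x.coeff n = 0 ↔ y.coeff n = 0) :
    val x = val y := by
  by_cases hy : y = 0
  · have hx : x = 0 := HahnSeries.ext (funext fun n => (h n).mpr (by simp [hy]))
    rw [hx, hy]
  · have hx : x ≠ 0 := by
      intro hx0
      apply hy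
      exact HahnSeries.ext (funext fun n => (h n).mp (by simp [hx0]))
    exact le_antisymm (val_le_of_imp hy fun n hn => fun h0 => hn ((h n).mp h0))
      (val_le_of_imp hx fun n hn => fun h0 => hn ((h n).mpr h0))

end Helpers

/-- the case `k ≤ e` for `x = ε^{(d,e,f)}s_2s_1`, `d ≤ e < f`: under the
stated valuation conditions, `val(c) ≤ 0` iff `e ≥ j`, and when `e ≥ j` one has
`val(c) = j − e`. -/
theorem case_d_min_k_le_e_val_c (F : Type*) [Field F] [Fintype F]
    (σ : LaurentSeries (AlgebraicClosure F) → LaurentSeries (AlgebraicClosure F))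
    (hσ : IsFrobenius (AlgebraicClosure F) (Fintype.card F) σ)
    (a b c : LaurentSeries (AlgebraicClosure F))
    (i j k : ℤ) (hij : j < i) (hjk : k < j) (hijk : i + j + k = 0)
    (d e f : ℤ) (hde : d ≤ e) (hef : e < f) (hdef : d + e + f = 0)
    (hke : k ≤ e)
    (α β γ : LaurentSeries (AlgebraicClosure F))
    (hα : α = eps (AlgebraicClosure F) ^ i * σ a - eps (AlgebraicClosure F) ^ j * a)
    (hβ : β = eps (AlgebraicClosure F) ^ i * σ b - eps (AlgebraicClosure F) ^ k * b -
      a * (eps (AlgebraicClosure F) ^ j * σ c - eps (AlgebraicClosure F) ^ k * c))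
    (hγ : γ = eps (AlgebraicClosure F) ^ j * σ c - eps (AlgebraicClosure F) ^ k * c)
    (hvβ : val β = (d : WithTop ℤ))
    (hkd : d < k)
    (hjkde : d + e < j + k)
    (hvα : val (α * eps (AlgebraicClosure F) ^ k) = ((d + e : ℤ) : WithTop ℤ))
    (hminor : ((d + e : ℤ) : WithTop ℤ) < val (α * γ - β * eps (AlgebraicClosure F) ^ j)) :
    (val c ≤ (0 : WithTop ℤ) ↔ j ≤ e) ∧
    (j ≤ e → val c = ((j - e : ℤ) : WithTop ℤ)) := by
  classical
  set E := eps (AlgebraicClosure F) with hE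
  have hq : Fintype.card F ≠ 0 := Fintype.card_ne_zero
  have hσv : ∀ x : LaurentSeries (AlgebraicClosure F), val (σ x) = val x := fun x =>
    val_congr fun n => by rw [hσ x n]; exact pow_eq_zero_iff hq
  have hα0 : α ≠ 0 := by
    intro h
    rw [h, zero_mul, val_zero'] at hvα
    exact WithTop.coe_ne_top (a := d + e) hvα.symm
  obtain ⟨vα, hvα'⟩ := WithTop.ne_top_iff_exists.mp (HahnSeries.orderTop_ne_top.mpr hα0)
  have hvalα : val α = (vα : WithTop ℤ) := hvα'.symm
  have hvαk : vα + k = d + e := by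
    have h := val_mul' α (E ^ k)
    rw [hvα, hvalα, val_eps_zpow] at h
    exact_mod_cast h.symm
  have hvβj : val (β * E ^ j) = ((d + j : ℤ) : WithTop ℤ) := by
    rw [val_mul', hvβ, val_eps_zpow]; norm_cast
  by_cases hc : c = 0
  · -- c = 0 forces e < j
    have hσ0 : σ 0 = 0 := HahnSeries.ext (funext fun n => by
      rw [hσ 0 n]; simp [zero_pow hq])
    have hγ0 : γ = 0 := by rw [hγ, hc, hσ0]; ring
    have hdiff : α * γ - β * E ^ j = -(β * E ^ j) := by rw [hγ0]; ring
    rw [hdiff, val_neg', hvβj] at hminor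
    have hej : e < j := by
      have := WithTop.coe_lt_coe.mp hminor; omega
    refine ⟨⟨fun h => ?_, fun h => absurd h (by omega)⟩, fun h => absurd h (by omega)⟩
    rw [hc, val_zero'] at h
    exact absurd h (by simp)
  · obtain ⟨vc, hvc⟩ := WithTop.ne_top_iff_exists.mp (HahnSeries.orderTop_ne_top.mpr hc)
    have hvalc : val c = (vc : WithTop ℤ) := hvc.symm
    have h1 : val (E ^ k * c) = ((k + vc : ℤ) : WithTop ℤ) := by
      rw [val_mul', val_eps_zpow, hvalc]; norm_cast
    have h2 : val (E ^ j * σ c) = ((j + vc : ℤ) : WithTop ℤ) := by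
      rw [val_mul', val_eps_zpow, hσv, hvalc]; norm_cast
    have hvγ : val γ = ((k + vc : ℤ) : WithTop ℤ) := by
      have hne : γ = -(E ^ k * c - E ^ j * σ c) := by rw [hγ]; ring
      have hlt : val (E ^ k * c) < val (E ^ j * σ c) := by
        rw [h1, h2]
        exact_mod_cast (by omega : k + vc < j + vc)
      rw [hne, val_neg']
      exact (HahnSeries.orderTop_sub hlt).trans h1
    have hvαγ : val (α * γ) = ((d + e + vc : ℤ) : WithTop ℤ) := by
      rw [val_mul', hvalα, hvγ]
      norm_cast
      omega
    rcases lt_trichotomy vc (j - e) with hlt | heq | hgt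
    · have hltv : val (α * γ) < val (β * E ^ j) := by
        rw [hvαγ, hvβj]
        exact_mod_cast (by omega : d + e + vc < d + j)
      have hvd : val (α * γ - β * E ^ j) = ((d + e + vc : ℤ) : WithTop ℤ) :=
        (HahnSeries.orderTop_sub hltv).trans hvαγ
      rw [hvd] at hminor
      have h0vc : 0 < vc := by
        have := WithTop.coe_lt_coe.mp hminor; omega
      have hej : e < j := by omega
      refine ⟨⟨fun h => ?_, fun h => absurd h (by omega)⟩, fun h => absurd h (by omega)⟩
      rw [hvalc] at h
      exact absurd (show vc ≤ 0 by exact_mod_cast h) (by omega)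
    · constructor
      · rw [hvalc, heq]
        constructor
        · intro h
          have : (j - e : ℤ) ≤ 0 := by exact_mod_cast h
          omega
        · intro h
          exact_mod_cast (by omega : (j - e : ℤ) ≤ 0)
      · intro _
        rw [hvalc, heq]
    · have hltv : val (β * E ^ j) < val (α * γ) := by
        rw [hvαγ, hvβj]
        exact_mod_cast (by omega : d + j < d + e + vc)
      have hvd : val (α * γ - β * E ^ j) = ((d + j : ℤ) : WithTop ℤ) := by
        have hne : α * γ - β * E ^ j = -(β * E ^ j - α * γ) := by ring
        rw [hne, val_neg']
        exact (HahnSeries.orderTop_sub hltv).trans hvβj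
      rw [hvd] at hminor
      have hej : e < j := by
        have := WithTop.coe_lt_coe.mp hminor; omega
      have h0vc : 0 < vc := by omega
      refine ⟨⟨fun h => ?_, fun h => absurd h (by omega)⟩, fun h => absurd h (by omega)⟩
      rw [hvalc] at h
      exact absurd (show vc ≤ 0 by exact_mod_cast h) (by omega)
end
end
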